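/- If a partial order (X,≼) has a finite multi-utility consisting of N functions, then it has a realizer consisting of N linear extensions, i.e., N total order extensions (≼_1,...,≼_N) with x ≼ y iff x ≼_i y for all i. -/
import Mathlib


/-- A partial order with a multi-utility of `N` functions has a realizer
consisting of `N` linear extensions. -/
theorem finite_multiutility_gives_finite_realizer {X : Type*} (le : X → X → Prop)
    (hrefl : ∀ x, le x x) (htrans : ∀ x y z, le x y → le y z → le x z)
    (hanti : ∀ x y, le x y → le y x → x = y)
    (N : ℕ) (u : Fin N → X → ℝ) (hu : ∀ x y, le x y ↔ ∀ i, u i x ≤ u i y) :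
    ∃ R : Fin N → X → X → Prop,
      (∀ i, (∀ x, R i x x) ∧
        (∀ x y z, R i x y → R i y z → R i x z) ∧
        (∀ x y, R i x y → R i y x → x = y) ∧
        (∀ x y, R i x y ∨ R i y x) ∧
        (∀ x y, le x y → R i x y)) ∧
      (∀ x y, le x y ↔ ∀ i, R i x y) := by
  haveI : IsPartialOrder X le :=
    { refl := hrefl
      trans := htrans
      antisymm := hanti }
  obtain ⟨s, hs, hles⟩ := extend_partialOrder le
  refine ⟨fun i x y => u i x < u i y ∨ (u i x = u i y ∧ s x y), fun i => ⟨?_, ?_, ?_, ?_, ?_⟩, ?_⟩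
  · exact fun x => Or.inr ⟨rfl, hs.refl x⟩
  · rintro x y z (h1 | ⟨h1, h1'⟩) (h2 | ⟨h2, h2'⟩)
    · exact Or.inl (h1.trans h2)
    · exact Or.inl (h2 ▸ h1)
    · exact Or.inl (h1 ▸ h2)
    · exact Or.inr ⟨h1.trans h2, hs.trans _ _ _ h1' h2'⟩
  · rintro x y (h1 | ⟨h1, h1'⟩) (h2 | ⟨h2, h2'⟩)
    · exact absurd h2 (asymm h1)
    · exact absurd h2 h1.ne'
    · exact absurd h2 h1.symm.not_lt
    · exact hs.antisymm _ _ h1' h2'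
  · intro x y
    rcases lt_trichotomy (u i x) (u i y) with h | h | h
    · exact Or.inl (Or.inl h)
    · rcases hs.total x y with hxy | hyx
      · exact Or.inl (Or.inr ⟨h, hxy⟩)
      · exact Or.inr (Or.inr ⟨h.symm, hyx⟩)
    · exact Or.inr (Or.inl h)
  · intro x y hxy
    rcases ((hu x y).1 hxy i).lt_or_eq with h | h
    · exact Or.inl h
    · exact Or.inr ⟨h, hles _ _ hxy⟩
  · intro x y
    constructor
    · intro hxy i
      rcases ((hu x y).1 hxy i).lt_or_eq with h | h
      · exact Or.inl h
      · exact Or.inr ⟨h, hles _ _ hxy⟩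
    · intro h
      refine (hu x y).2 fun i => ?_
      rcases h i with h' | ⟨h', _⟩
      · exact h'.le
      · exact h'.le
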